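/- Let d ≥ 1 and let c_0, c_1, …, c_{2d−1} be integers with c_i ≥ 1 for all i. Then [c_0, c_1, …, c_{2d−1}]⁺ = [c_0+1, 2^[c_1−1], c_2+2, 2^[c_3−1], c_4+2, …, c_{2d−2}+2, 2^[c_{2d−1}−1]]⁻, where 2^[k] denotes the integer 2 repeated k times (an empty block when k = 0); in particular for d = 1 this reads [c_0, c_1]⁺ = [c_0+1, 2^[c_1−1]]⁻. -/

import Mathlib

/-- The positive continued fraction `[b_0, …, b_n]⁺ = b_0 + 1/[b_1, …, b_n]⁺`. -/
def cfPlus : List ℚ → ℚ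
  | [] => 0
  | [b] => b
  | b :: c :: rest => b + 1 / cfPlus (c :: rest)

/-- The negative continued fraction `[b_0, …, b_n]⁻ = b_0 - 1/[b_1, …, b_n]⁻`. -/
def cfMinus : List ℚ → ℚ
  | [] => 0
  | [b] => b
  | b :: c :: rest => b - 1 / cfMinus (c :: rest)

lemma cfPlus_cons (a : ℚ) (M : List ℚ) (h : M ≠ []) :
    cfPlus (a :: M) = a + 1 / cfPlus M := by
  cases M with
  | nil => exact absurd rfl h
  | cons b t => rfl

lemma cfMinus_cons (a : ℚ) (M : List ℚ) (h : M ≠ []) :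
    cfMinus (a :: M) = a - 1 / cfMinus M := by
  cases M with
  | nil => exact absurd rfl h
  | cons b t => rfl

lemma cfPlus_one_le : ∀ (L : List ℚ), L ≠ [] → (∀ x ∈ L, 1 ≤ x) → 1 ≤ cfPlus L
  | [], h, _ => absurd rfl h
  | [b], _, hb => by simpa [cfPlus] using hb b (by simp)
  | b :: c :: t, _, hb => by
      have ht : 1 ≤ cfPlus (c :: t) :=
        cfPlus_one_le (c :: t) (by simp) (fun x hx => hb x (by simp [hx]))
      have h0 : 0 < cfPlus (c :: t) := lt_of_lt_of_le one_pos ht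
      have hb1 : 1 ≤ b := hb b (by simp)
      have : 0 < 1 / cfPlus (c :: t) := by positivity
      simp only [cfPlus]
      linarith

lemma cfMinus_head_shift (a : ℚ) (M : List ℚ) :
    cfMinus ((a + 1) :: M) = cfMinus (a :: M) + 1 := by
  cases M <;> simp [cfMinus] <;> ring

lemma rep_two (k : ℕ) (M : List ℚ) (hM : M ≠ []) (hy : 1 < cfMinus M) :
    cfMinus (List.replicate k 2 ++ M) =
      (((k : ℚ) + 1) * cfMinus M - k) / ((k : ℚ) * cfMinus M - ((k : ℚ) - 1)) ∧
    1 < cfMinus (List.replicate k 2 ++ M) := by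
  induction k with
  | zero => simpa using hy
  | succ n ih =>
    obtain ⟨hval, hgt⟩ := ih
    have hne : List.replicate n (2:ℚ) ++ M ≠ [] := by
      cases M with
      | nil => exact absurd rfl hM
      | cons b t => simp
    have hden : 0 < (n : ℚ) * cfMinus M - ((n : ℚ) - 1) := by
      have : (0:ℚ) ≤ n := Nat.cast_nonneg n
      nlinarith
    have hz : cfMinus (List.replicate n 2 ++ M) ≠ 0 := by linarith
    have hstep : cfMinus (List.replicate (n+1) 2 ++ M)
        = 2 - 1 / cfMinus (List.replicate n 2 ++ M) := by
      rw [List.replicate_succ, List.cons_append, cfMinus_cons _ _ hne]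
    have hA : (0:ℚ) < ((n:ℚ)+1) * cfMinus M - n := by
      have : (0:ℚ) ≤ n := Nat.cast_nonneg n
      nlinarith
    constructor
    · rw [hstep, hval]
      push_cast
      rw [one_div_div]
      field_simp [hA.ne', show cfMinus M * ((n:ℚ)+1) - n ≠ 0 by linarith,
        show cfMinus M * ((n:ℚ)+1) - ((n:ℚ)+1-1) ≠ 0 by linarith]
      ring
    · rw [hstep]
      have h1 : 1 / cfMinus (List.replicate n 2 ++ M) < 1 := by
        rw [div_lt_one (by linarith)]; linarith
      linarith

lemma cfMinus_rep2 : ∀ n : ℕ, cfMinus (List.replicate (n+1) (2:ℚ)) = ((n:ℚ)+2)/((n:ℚ)+1)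
  | 0 => by norm_num [cfMinus]
  | n+1 => by
    have ih := cfMinus_rep2 n
    have hne : List.replicate (n+1) (2:ℚ) ≠ [] := by simp
    rw [List.replicate_succ, cfMinus_cons _ _ hne, ih]
    have h1 : ((n:ℚ)+1) ≠ 0 := by positivity
    have h2 : ((n:ℚ)+2) ≠ 0 := by positivity
    push_cast
    field_simp
    ring

lemma range_map_shift (n : ℕ) (f : ℕ → ℚ) :
    (List.range (n+2)).map f = f 0 :: f 1 :: (List.range n).map (fun i => f (i+2)) := by
  rw [List.range_succ_eq_map, List.range_succ_eq_map]
  simp [List.map_map, Function.comp, Nat.succ_eq_add_one]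

lemma aux : ∀ (d : ℕ) (c : ℕ → ℤ), (∀ i < 2 * (d + 1), 1 ≤ c i) →
    cfPlus ((List.range (2 * (d + 1))).map (fun i => (c i : ℚ))) =
    cfMinus (((c 0 : ℚ) + 1) ::
      (List.replicate (c 1 - 1).toNat (2 : ℚ) ++
        (List.range d).flatMap (fun j =>
          ((c (2 * (j + 1)) : ℚ) + 2) ::
            List.replicate ((c (2 * (j + 1) + 1)) - 1).toNat (2 : ℚ)))) := by
  intro d
  induction d with
  | zero =>
    intro c hc
    have h1 : 1 ≤ c 1 := hc 1 (by omega)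
    obtain ⟨k, hk⟩ : ∃ k : ℕ, (c 1 - 1).toNat = k := ⟨_, rfl⟩
    have hck : (c 1 : ℚ) = (k : ℚ) + 1 := by
      have h := Int.toNat_of_nonneg (show (0:ℤ) ≤ c 1 - 1 by omega)
      rw [hk] at h
      have : (c 1 : ℤ) = (k : ℤ) + 1 := by omega
      exact_mod_cast this
    have hL : (List.range (2 * (0 + 1))).map (fun i => (c i : ℚ)) = [(c 0 : ℚ), (c 1 : ℚ)] := by
      rfl
    rw [hL, hk]
    simp only [List.range_zero, List.flatMap_nil, List.append_nil]
    cases k with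
    | zero =>
      simp only [List.replicate_zero]
      have : (c 1 : ℚ) = 1 := by rw [hck]; norm_num
      simp [cfPlus, cfMinus, this]
    | succ n =>
      have hne : List.replicate (n + 1) (2:ℚ) ≠ [] := by simp
      rw [cfMinus_cons _ _ hne, cfMinus_rep2]
      have hn1 : ((n:ℚ) + 1) ≠ 0 := by positivity
      have hn2 : ((n:ℚ) + 2) ≠ 0 := by positivity
      have hc1 : (c 1 : ℚ) ≠ 0 := by rw [hck]; push_cast; positivity
      simp only [cfPlus]
      rw [hck, one_div_div]
      push_cast
      field_simp
      ring
  | succ d ih =>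
    intro c hc
    have hc'h : ∀ i < 2 * (d + 1), 1 ≤ (fun i => c (i + 2)) i := fun i hi => hc (i + 2) (by omega)
    have ihP := ih (fun i => c (i + 2)) hc'h
    set S : List ℚ := (List.range (2 * (d + 1))).map (fun i => (c (i + 2) : ℚ)) with hS
    have hL : (List.range (2 * (d + 1 + 1))).map (fun i => (c i : ℚ))
        = (c 0 : ℚ) :: (c 1 : ℚ) :: S := by
      have h2 : 2 * (d + 1 + 1) = (2 * (d + 1)) + 2 := by ring
      rw [h2, range_map_shift]
    set F : List ℚ := (List.range d).flatMap (fun j =>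
        ((c (2 * (j + 1) + 2) : ℚ) + 2) ::
          List.replicate ((c (2 * (j + 1) + 1 + 2)) - 1).toNat (2 : ℚ)) with hF
    have hR : (List.range (d + 1)).flatMap (fun j =>
          ((c (2 * (j + 1)) : ℚ) + 2) ::
            List.replicate ((c (2 * (j + 1) + 1)) - 1).toNat (2 : ℚ))
        = ((c 2 : ℚ) + 2) :: (List.replicate ((c 3) - 1).toNat (2 : ℚ) ++ F) := by
      rw [List.range_succ_eq_map, List.flatMap_cons, List.flatMap_map]
      have hidx : ∀ j : ℕ, 2 * (Nat.succ j + 1) = 2 * (j + 1) + 2 := by omega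
      simp only [Function.comp, hidx, hF]
      norm_num
    set M : List ℚ := List.replicate ((c 3) - 1).toNat (2 : ℚ) ++ F with hM
    have ihP' : cfPlus S = cfMinus (((c 2 : ℚ) + 1) :: M) := ihP
    -- positivity of P
    have hSne : S ≠ [] := by
      rw [hS]
      simp [List.range_eq_nil]
    have hP1 : 1 ≤ cfPlus S := by
      apply cfPlus_one_le S hSne
      intro x hx
      rw [hS] at hx
      simp only [List.mem_map, List.mem_range] at hx
      obtain ⟨i, hi, rfl⟩ := hx
      exact_mod_cast hc'h i hi
    set P : ℚ := cfPlus S with hP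
    have hy : cfMinus (((c 2 : ℚ) + 2) :: M) = P + 1 := by
      rw [show ((c 2 : ℚ) + 2) = ((c 2 : ℚ) + 1) + 1 by ring, cfMinus_head_shift, ← ihP']
    have hy1 : 1 < cfMinus (((c 2 : ℚ) + 2) :: M) := by rw [hy]; linarith
    obtain ⟨k, hk⟩ : ∃ k : ℕ, (c 1 - 1).toNat = k := ⟨_, rfl⟩
    have h1 : 1 ≤ c 1 := hc 1 (by omega)
    have hck : (c 1 : ℚ) = (k : ℚ) + 1 := by
      have h := Int.toNat_of_nonneg (show (0:ℤ) ≤ c 1 - 1 by omega)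
      rw [hk] at h
      have : (c 1 : ℤ) = (k : ℤ) + 1 := by omega
      exact_mod_cast this
    obtain ⟨hrepv, hrepgt⟩ := rep_two k (((c 2 : ℚ) + 2) :: M) (by simp) hy1
    rw [hy] at hrepv
    -- assemble
    rw [hL, hR, hk]
    have htne : List.replicate k (2:ℚ) ++ (((c 2 : ℚ) + 2) :: M) ≠ [] := by simp
    rw [cfMinus_cons _ _ htne, hrepv]
    have hcons1 : ((c 1 : ℚ)) :: S ≠ [] := by simp
    rw [cfPlus_cons _ _ (by simp : ((c 1 : ℚ)) :: S ≠ []),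
        cfPlus_cons _ _ hSne]
    rw [hck, ← hP]
    have hP0 : (0:ℚ) < P := by linarith
    have hk0 : (0:ℚ) ≤ (k:ℚ) := Nat.cast_nonneg k
    have hden1 : (0:ℚ) < (k:ℚ) * (P + 1) - ((k:ℚ) - 1) := by nlinarith
    have hnum1 : (0:ℚ) < ((k:ℚ) + 1) * (P + 1) - (k:ℚ) := by nlinarith
    have hdd : (0:ℚ) < (k:ℚ) + 1 + 1 / P := by
      have := one_div_pos.mpr hP0
      linarith
    rw [one_div_div]
    field_simp [hP0.ne', hnum1.ne', hdd.ne']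
    ring

/-- Conversion between positive and negative continued fractions:
`[c_0, c_1, …, c_{2d-1}]⁺ = [c_0+1, 2^[c_1-1], c_2+2, 2^[c_3-1], …, c_{2d-2}+2, 2^[c_{2d-1}-1]]⁻`,
where `2^[k]` denotes the integer `2` repeated `k` times. -/
theorem stmt_2 (d : ℕ) (hd : 1 ≤ d) (c : ℕ → ℤ) (hc : ∀ i < 2 * d, 1 ≤ c i) :
    cfPlus ((List.range (2 * d)).map (fun i => (c i : ℚ))) =
    cfMinus (((c 0 : ℚ) + 1) ::
      (List.replicate (c 1 - 1).toNat (2 : ℚ) ++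
        (List.range (d - 1)).flatMap (fun j =>
          ((c (2 * (j + 1)) : ℚ) + 2) ::
            List.replicate ((c (2 * (j + 1) + 1)) - 1).toNat (2 : ℚ)))) := by
  obtain ⟨e, rfl⟩ : ∃ e, d = e + 1 := ⟨d - 1, by omega⟩
  have h := aux e c (fun i hi => hc i hi)
  simpa using h
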